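/- Let a > b > 0. For any triangle P₁P₂P₃ inscribed in the circle of radius a + b centered at the origin whose three side lines are each tangent to the concentric ellipse x²/a² + y²/b² = 1 (i.e., each side lies on a line {(x,y) : p·x + q·y = 1} with a²p² + b²q² = 1), the product of the cosines of its three interior angles equals a*b/(2*(a+b)²). -/

import Mathlib

open EuclideanGeometry

/-- The line through `P` and `Q` is tangent to the ellipse `x²/a² + y²/b² = 1`:
it lies on a line `{(x,y) : p·x + q·y = 1}` with `a²p² + b²q² = 1`. -/
def SideTangentToEllipse (a b : ℝ) (P Q : EuclideanSpace ℝ (Fin 2)) : Prop :=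
  ∃ p q : ℝ, a ^ 2 * p ^ 2 + b ^ 2 * q ^ 2 = 1 ∧
    p * P 0 + q * P 1 = 1 ∧ p * Q 0 + q * Q 1 = 1

private lemma cossq_poly (r x1 y1 x2 y2 x3 y3 : ℝ)
    (h1 : x1^2 + y1^2 = r^2) (h2 : x2^2 + y2^2 = r^2) (h3 : x3^2 + y3^2 = r^2) :
    2*r^2*((x2-x1)*(x3-x1)+(y2-y1)*(y3-y1))^2
      = (r^2+(x2*x3+y2*y3))*(((x2-x1)^2+(y2-y1)^2)*((x3-x1)^2+(y3-y1)^2)) := by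
  linear_combination (1*x1^2*x2^2 + 1*y1^2*x2^2 + -2*x1*x2^3 + 2*x2^4 + -2*y1*x2^2*y2 + 1*x1^2*y2^2 + 1*y1^2*y2^2 + -2*x1*x2*y2^2 + 2*x2^2*y2^2 + -2*y1*y2^3 + -1*x1^2*x2*x3 + -1*y1^2*x2*x3 + 2*x2^3*x3 + 2*y1*x2*y2*x3 + -2*x1*y2^2*x3 + 2*x2*y2^2*x3 + 2*x1*x2*x3^2 + -3*x2^2*x3^2 + 1*y2^2*x3^2 + -1*x2*x3^3 + -2*y1*x2^2*y3 + -1*x1^2*y2*y3 + -1*y1^2*y2*y3 + 2*x1*x2*y2*y3 + 2*x2^2*y2*y3 + 2*y2^3*y3 + 2*y1*x2*x3*y3 + 2*x1*y2*x3*y3 + -4*x2*y2*x3*y3 + -1*y2*x3^2*y3 + -1*x2^2*y3^2 + 2*y1*y2*y3^2 + -1*y2^2*y3^2 + -1*x2*x3*y3^2 + -1*y2*y3^3) * h1 + (-1*x1^4 + -2*x1^2*y1^2 + -1*y1^4 + 2*x1^3*x2 + 2*x1*y1^2*x2 + -2*x1^2*x2^2 + -2*y1^2*x2^2 + 2*x1^2*y1*y2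 + 2*y1^3*y2 + 2*x1^3*x3 + 2*x1*y1^2*x3 + -3*x1^2*x2*x3 + -3*y1^2*x2*x3 + -1*x1^2*x3^2 + 1*y1^2*x3^2 + 2*x2^2*x3^2 + -2*y1*y2*x3^2 + 1*x2*x3^3 + 2*x1^2*y1*y3 + 2*y1^3*y3 + -3*x1^2*y2*y3 + -3*y1^2*y2*y3 + -4*x1*y1*x3*y3 + 2*y1*x2*x3*y3 + 2*x1*y2*x3*y3 + 1*y2*x3^2*y3 + 1*x1^2*y3^2 + -1*y1^2*y3^2 + -2*x1*x2*y3^2 + 2*x2^2*y3^2 + 1*x2*x3*y3^2 + 1*y2*y3^3) * h2 + (2*y1^2*x2^2 + 2*x1*x2^3 + -2*x2^4 + -4*x1*y1*x2*y2 + 2*y1*x2^2*y2 + -2*y1^2*y2^2 + 2*x1*x2*y2^2 + -2*x2^2*y2^2 + 2*y1*y2^3 + 2*x1*x2^2*x3 + -2*x2^3*x3 + 2*y1*x2*y2*x3 + -2*x2*y2^2*x3 + 2*x1*x2*y2*y3 + -2*x2^2*y2*y3 + 2*y1*y2^2*y3 + -2*y2^3*y3) * h3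

private lemma side_poly (a b p q x1 y1 x2 y2 : ℝ)
    (hc1 : x1^2 + y1^2 = (a+b)^2) (hc2 : x2^2 + y2^2 = (a+b)^2)
    (hne : (x1-x2)^2 + (y1-y2)^2 ≠ 0)
    (htan : a^2*p^2 + b^2*q^2 = 1)
    (hl1 : p*x1 + q*y1 = 1) (hl2 : p*x2 + q*y2 = 1) :
    (a^2-b^2)*(x1*x2-y1*y2) = 2*a*b*(a+b)^2 + (a+b)^2*(x1*x2+y1*y2) := by
  have hcne : x1*y2 - x2*y1 ≠ 0 := by
    intro h0
    have hs2 : (x1*x2 + y1*y2 - (a+b)^2) * (x1*x2 + y1*y2 + (a+b)^2) = 0 := by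
      linear_combination (x2^2+y2^2)*hc1 + (a+b)^2*hc2 - (x1*y2 - x2*y1)*h0
    rcases mul_eq_zero.mp hs2 with h | h
    · exact hne (by linear_combination hc1 + hc2 - 2*h)
    · have hz : (x1+x2)^2 + (y1+y2)^2 = 0 := by linear_combination hc1 + hc2 + 2*h
      have hx : x1 + x2 = 0 := by nlinarith [sq_nonneg (x1+x2), sq_nonneg (y1+y2)]
      have hy : y1 + y2 = 0 := by nlinarith [sq_nonneg (x1+x2), sq_nonneg (y1+y2)]
      have : (1:ℝ) = -1 := by linear_combination -hl1 - hl2 + p*hx + q*hy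
      norm_num at this
  have hpc : p*(x1*y2 - x2*y1) = y2 - y1 := by linear_combination y2*hl1 - y1*hl2
  have hqc : q*(x1*y2 - x2*y1) = x1 - x2 := by linear_combination x1*hl2 - x2*hl1
  have hT : a^2*(y2-y1)^2 + b^2*(x1-x2)^2 = (x1*y2-x2*y1)^2 := by
    linear_combination (-(a^2)*(p*(x1*y2-x2*y1)+(y2-y1)))*hpc
      + (-(b^2)*(q*(x1*y2-x2*y1)+(x1-x2)))*hqc + ((x1*y2-x2*y1)^2)*htan
  have hkey : ((x1-x2)^2+(y1-y2)^2)
      * ((a^2-b^2)*(x1*x2-y1*y2) - 2*a*b*(a+b)^2 - (a+b)^2*(x1*x2+y1*y2)) = 0 := by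
    linear_combination (2*x2^2 + 2*y2^2) * hT + (-2*a*b*x1*x2 + -2*b^2*x1*x2 + 2*a*b*x2^2 + 2*b^2*x2^2 + 2*a*b*y1*y2 + 2*b^2*y1*y2 + -2*y1*x2^2*y2 + -2*a*b*y2^2 + -2*b^2*y2^2 + 2*x2^2*y2^2 + -2*y1*y2^3 + 2*y2^4) * hc1 + (2*a*b*x1^2 + 2*a*b*y1^2 + -2*a*b*x1*x2 + 2*b^2*x1*x2 + -2*b^2*x2^2 + 2*y1^2*x2^2 + -6*a*b*y1*y2 + -2*b^2*y1*y2 + 2*x1^2*y1*y2 + 2*y1^3*y2 + -4*x1*y1*x2*y2 + 4*a*b*y2^2 + 2*b^2*y2^2 + -2*y1^2*y2^2) * hc2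
  rcases mul_eq_zero.mp hkey with h | h
  · exact absurd h hne
  · linarith

private lemma core_poly (a b C1 S1 C2 S2 C3 S3 : ℝ)
    (hG1 : C1^2 + S1^2 = (a+b)^4)
    (hG2 : C2^2 + S2^2 = (a+b)^4)
    (hG3 : C3^2 + S3^2 = (a+b)^4)
    (hF1 : C2*C3 + S2*S3 = (a-b)*(a+b)*C1 - 2*a*b*(a+b)^2)
    (hF2 : C1*C3 + S1*S3 = (a-b)*(a+b)*C2 - 2*a*b*(a+b)^2)
    (hF3 : C1*C2 + S1*S2 = (a-b)*(a+b)*C3 - 2*a*b*(a+b)^2) :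
    ((a+b)*(C1+C2+C3) + (a-b)*(a+b)^2)
      * (((a+b)^4 - (C2*C3+S2*S3)) * (((a+b)^4 - (C1*C3+S1*S3))
        * ((a+b)^4 - (C1*C2+S1*S2)))) = 0 := by
  linear_combination (-1*a^9*C2 + -9*a^8*b*C2 + -36*a^7*b^2*C2 + -84*a^6*b^3*C2 + -126*a^5*b^4*C2 + -126*a^4*b^5*C2 + -84*a^3*b^6*C2 + -36*a^2*b^7*C2 + -9*a*b^8*C2 + -1*b^9*C2 + -1*a^9*C3 + -9*a^8*b*C3 + -36*a^7*b^2*C3 + -84*a^6*b^3*C3 + -126*a^5*b^4*C3 + -126*a^4*b^5*C3 + -84*a^3*b^6*C3 + -36*a^2*b^7*C3 + -9*a*b^8*C3 + -1*b^9*C3 + 1*a^7*C2*C3 + 5*a^6*b*C2*C3 + 9*a^5*b^2*C2*C3 + 5*a^4*b^3*C2*C3 + -5*a^3*b^4*C2*C3 + -9*a^2*b^5*C2*C3 + -5*a*b^6*C2*C3 + -1*b^7*C2*C3 + 1*a^5*C1*C2*C3 + 5*a^4*b*C1*C2*C3 + 10*a^3*b^2*C1*C2*C3 + 10*a^2*b^3*C1*C2*C3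 + 5*a*b^4*C1*C2*C3 + 1*b^5*C1*C2*C3 + 2*a^5*C2^2*C3 + 10*a^4*b*C2^2*C3 + 20*a^3*b^2*C2^2*C3 + 20*a^2*b^3*C2^2*C3 + 10*a*b^4*C2^2*C3 + 2*b^5*C2^2*C3 + 2*a^5*C2*C3^2 + 10*a^4*b*C2*C3^2 + 20*a^3*b^2*C2*C3^2 + 20*a^2*b^3*C2*C3^2 + 10*a*b^4*C2*C3^2 + 2*b^5*C2*C3^2 + 1*a^5*S1*C2*S3 + 5*a^4*b*S1*C2*S3 + 10*a^3*b^2*S1*C2*S3 + 10*a^2*b^3*S1*C2*S3 + 5*a*b^4*S1*C2*S3 + 1*b^5*S1*C2*S3 + 3/2*a^5*C2*S2*S3 + 15/2*a^4*b*C2*S2*S3 + 15*a^3*b^2*C2*S2*S3 + 15*a^2*b^3*C2*S2*S3 + 15/2*a*b^4*C2*S2*S3 + 3/2*b^5*C2*S2*S3 + 1*a^5*S1*C3*S3 + 5*a^4*b*S1*C3*S3 + 10*a^3*b^2*S1*C3*S3 + 10*a^2*b^3*S1*C3*S3 + 5*a*b^4*S1*C3*S3 + 1*b^5*S1*C3*S3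 + 5/2*a^5*S2*C3*S3 + 25/2*a^4*b*S2*C3*S3 + 25*a^3*b^2*S2*C3*S3 + 25*a^2*b^3*S2*C3*S3 + 25/2*a*b^4*S2*C3*S3 + 5/2*b^5*S2*C3*S3 + -1*a^5*C2*S3^2 + -5*a^4*b*C2*S3^2 + -10*a^3*b^2*C2*S3^2 + -10*a^2*b^3*C2*S3^2 + -5*a*b^4*C2*S3^2 + -1*b^5*C2*S3^2 + -1*a^5*C3*S3^2 + -5*a^4*b*C3*S3^2 + -10*a^3*b^2*C3*S3^2 + -10*a^2*b^3*C3*S3^2 + -5*a*b^4*C3*S3^2 + -1*b^5*C3*S3^2 + -1*a^3*C2^2*C3^2 + -1*a^2*b*C2^2*C3^2 + 1*a*b^2*C2^2*C3^2 + 1*b^3*C2^2*C3^2 + -1*a^3*C2*S2*C3*S3 + -1*a^2*b*C2*S2*C3*S3 + 1*a*b^2*C2*S2*C3*S3 + 1*b^3*C2*S2*C3*S3 + -1*a*C1*C2^2*C3^2 + -1*b*C1*C2^2*C3^2 + -1*a*C2^3*C3^2 + -1*b*C2^3*C3^2 + -1*a*S1*C2*S2*C3^2 + -1*b*S1*C2*S2*C3^2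 + -1*a*C2^2*C3^3 + -1*b*C2^2*C3^3 + -1*a*S1*C2^2*C3*S3 + -1*b*S1*C2^2*C3*S3 + -1*a*C1*C2*S2*C3*S3 + -1*b*C1*C2*S2*C3*S3 + -1*a*C2^2*S2*C3*S3 + -1*b*C2^2*S2*C3*S3 + -1*a*S1*S2^2*C3*S3 + -1*b*S1*S2^2*C3*S3 + -1*a*C2*S2*C3^2*S3 + -1*b*C2*S2*C3^2*S3 + -1*a*S1*C2*S2*S3^2 + -1*b*S1*C2*S2*S3^2) * hG1 + (-1*a^9*C1 + -9*a^8*b*C1 + -36*a^7*b^2*C1 + -84*a^6*b^3*C1 + -126*a^5*b^4*C1 + -126*a^4*b^5*C1 + -84*a^3*b^6*C1 + -36*a^2*b^7*C1 + -9*a*b^8*C1 + -1*b^9*C1 + 1*a^9*C3 + 9*a^8*b*C3 + 36*a^7*b^2*C3 + 84*a^6*b^3*C3 + 126*a^5*b^4*C3 + 126*a^4*b^5*C3 + 84*a^3*b^6*C3 + 36*a^2*b^7*C3 + 9*a*b^8*C3 + 1*b^9*C3 + -1*a^7*S1^2 + -5*a^6*b*S1^2 + -9*a^5*b^2*S1^2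 + -5*a^4*b^3*S1^2 + 5*a^3*b^4*S1^2 + 9*a^2*b^5*S1^2 + 5*a*b^6*S1^2 + 1*b^7*S1^2 + 1*a^7*C1*C3 + 5*a^6*b*C1*C3 + 9*a^5*b^2*C1*C3 + 5*a^4*b^3*C1*C3 + -5*a^3*b^4*C1*C3 + -9*a^2*b^5*C1*C3 + -5*a*b^6*C1*C3 + -1*b^7*C1*C3 + -1*a^7*C3^2 + -5*a^6*b*C3^2 + -9*a^5*b^2*C3^2 + -5*a^4*b^3*C3^2 + 5*a^3*b^4*C3^2 + 9*a^2*b^5*C3^2 + 5*a*b^6*C3^2 + 1*b^7*C3^2 + 2*a^7*S1*S3 + 10*a^6*b*S1*S3 + 18*a^5*b^2*S1*S3 + 10*a^4*b^3*S1*S3 + -10*a^3*b^4*S1*S3 + -18*a^2*b^5*S1*S3 + -10*a*b^6*S1*S3 + -2*b^7*S1*S3 + -1*a^7*S3^2 + -5*a^6*b*S3^2 + -9*a^5*b^2*S3^2 + -5*a^4*b^3*S3^2 + 5*a^3*b^4*S3^2 + 9*a^2*b^5*S3^2 + 5*a*b^6*S3^2 + 1*b^7*S3^2 + -1*a^5*C1*S1^2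 + -5*a^4*b*C1*S1^2 + -10*a^3*b^2*C1*S1^2 + -10*a^2*b^3*C1*S1^2 + -5*a*b^4*C1*S1^2 + -1*b^5*C1*S1^2 + 1*a^5*C1*S1*S2 + 5*a^4*b*C1*S1*S2 + 10*a^3*b^2*C1*S1*S2 + 10*a^2*b^3*C1*S1*S2 + 5*a*b^4*C1*S1*S2 + 1*b^5*C1*S1*S2 + -2*a^5*S1^2*C3 + -10*a^4*b*S1^2*C3 + -20*a^3*b^2*S1^2*C3 + -20*a^2*b^3*S1^2*C3 + -10*a*b^4*S1^2*C3 + -2*b^5*S1^2*C3 + 1*a^5*C1*C2*C3 + 5*a^4*b*C1*C2*C3 + 10*a^3*b^2*C1*C2*C3 + 10*a^2*b^3*C1*C2*C3 + 5*a*b^4*C1*C2*C3 + 1*b^5*C1*C2*C3 + 1*a^5*S1*S2*C3 + 5*a^4*b*S1*S2*C3 + 10*a^3*b^2*S1*S2*C3 + 10*a^2*b^3*S1*S2*C3 + 5*a*b^4*S1*S2*C3 + 1*b^5*S1*S2*C3 + 1*a^5*C1*C3^2 + 5*a^4*b*C1*C3^2 + 10*a^3*b^2*C1*C3^2 + 10*a^2*b^3*C1*C3^2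 + 5*a*b^4*C1*C3^2 + 1*b^5*C1*C3^2 + -1*a^5*C2*C3^2 + -5*a^4*b*C2*C3^2 + -10*a^3*b^2*C2*C3^2 + -10*a^2*b^3*C2*C3^2 + -5*a*b^4*C2*C3^2 + -1*b^5*C2*C3^2 + -1*a^5*C3^3 + -5*a^4*b*C3^3 + -10*a^3*b^2*C3^3 + -10*a^2*b^3*C3^3 + -5*a*b^4*C3^3 + -1*b^5*C3^3 + 3/2*a^5*C1*S1*S3 + 15/2*a^4*b*C1*S1*S3 + 15*a^3*b^2*C1*S1*S3 + 15*a^2*b^3*C1*S1*S3 + 15/2*a*b^4*C1*S1*S3 + 3/2*b^5*C1*S1*S3 + -1/2*a^5*S1*C3*S3 + -5/2*a^4*b*S1*C3*S3 + -5*a^3*b^2*S1*C3*S3 + -5*a^2*b^3*S1*C3*S3 + -5/2*a*b^4*S1*C3*S3 + -1/2*b^5*S1*C3*S3 + -1*a^5*S2*C3*S3 + -5*a^4*b*S2*C3*S3 + -10*a^3*b^2*S2*C3*S3 + -10*a^2*b^3*S2*C3*S3 + -5*a*b^4*S2*C3*S3 + -1*b^5*S2*C3*S3 + 1*a^5*C1*S3^2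 + 5*a^4*b*C1*S3^2 + 10*a^3*b^2*C1*S3^2 + 10*a^2*b^3*C1*S3^2 + 5*a*b^4*C1*S3^2 + 1*b^5*C1*S3^2 + 1*a^3*S1^2*C3^2 + 1*a^2*b*S1^2*C3^2 + -1*a*b^2*S1^2*C3^2 + -1*b^3*S1^2*C3^2 + -1*a^3*C1*S1*C3*S3 + -1*a^2*b*C1*S1*C3*S3 + 1*a*b^2*C1*S1*C3*S3 + 1*b^3*C1*S1*C3*S3 + 1*a*C1*S1^2*C3^2 + 1*b*C1*S1^2*C3^2 + 1*a*S1^2*C2*C3^2 + 1*b*S1^2*C2*C3^2 + -1*a*C1*S1*S2*C3^2 + -1*b*C1*S1*S2*C3^2 + 1*a*S1^2*C3^3 + 1*b*S1^2*C3^3 + 1*a*S1^3*C3*S3 + 1*b*S1^3*C3*S3 + -1*a*C1*S1*C2*C3*S3 + -1*b*C1*S1*C2*C3*S3 + -1*a*C1*S1*C3^2*S3 + -1*b*C1*S1*C3^2*S3 + -1*a*C1*S1*S2*S3^2 + -1*b*C1*S1*S2*S3^2) * hG2 + (-1*a^11 + -9*a^10*b + -35*a^9*b^2 + -75*a^8*b^3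 + -90*a^7*b^4 + -42*a^6*b^5 + 42*a^5*b^6 + 90*a^4*b^7 + 75*a^3*b^8 + 35*a^2*b^9 + 9*a*b^10 + 1*b^11 + -1*a^9*C3 + -9*a^8*b*C3 + -36*a^7*b^2*C3 + -84*a^6*b^3*C3 + -126*a^5*b^4*C3 + -126*a^4*b^5*C3 + -84*a^3*b^6*C3 + -36*a^2*b^7*C3 + -9*a*b^8*C3 + -1*b^9*C3 + 1*a^7*S1^2 + 5*a^6*b*S1^2 + 9*a^5*b^2*S1^2 + 5*a^4*b^3*S1^2 + -5*a^3*b^4*S1^2 + -9*a^2*b^5*S1^2 + -5*a*b^6*S1^2 + -1*b^7*S1^2 + 1*a^7*C1*C2 + 5*a^6*b*C1*C2 + 9*a^5*b^2*C1*C2 + 5*a^4*b^3*C1*C2 + -5*a^3*b^4*C1*C2 + -9*a^2*b^5*C1*C2 + -5*a*b^6*C1*C2 + -1*b^7*C1*C2 + 1*a^7*S1*S2 + 5*a^6*b*S1*S2 + 9*a^5*b^2*S1*S2 + 5*a^4*b^3*S1*S2 + -5*a^3*b^4*S1*S2 + -9*a^2*b^5*S1*S2 + -5*a*b^6*S1*S2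 + -1*b^7*S1*S2 + -1*a^7*S1*S3 + -5*a^6*b*S1*S3 + -9*a^5*b^2*S1*S3 + -5*a^4*b^3*S1*S3 + 5*a^3*b^4*S1*S3 + 9*a^2*b^5*S1*S3 + 5*a*b^6*S1*S3 + 1*b^7*S1*S3 + 1*a^7*S2*S3 + 5*a^6*b*S2*S3 + 9*a^5*b^2*S2*S3 + 5*a^4*b^3*S2*S3 + -5*a^3*b^4*S2*S3 + -9*a^2*b^5*S2*S3 + -5*a*b^6*S2*S3 + -1*b^7*S2*S3 + 1*a^5*C1*S1^2 + 5*a^4*b*C1*S1^2 + 10*a^3*b^2*C1*S1^2 + 10*a^2*b^3*C1*S1^2 + 5*a*b^4*C1*S1^2 + 1*b^5*C1*S1^2 + -1*a^5*S1^2*C2 + -5*a^4*b*S1^2*C2 + -10*a^3*b^2*S1^2*C2 + -10*a^2*b^3*S1^2*C2 + -5*a*b^4*S1^2*C2 + -1*b^5*S1^2*C2 + 1/2*a^5*C1*S1*S2 + 5/2*a^4*b*C1*S1*S2 + 5*a^3*b^2*C1*S1*S2 + 5*a^2*b^3*C1*S1*S2 + 5/2*a*b^4*C1*S1*S2 + 1/2*b^5*C1*S1*S2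 + 1/2*a^5*S1*C2*S2 + 5/2*a^4*b*S1*C2*S2 + 5*a^3*b^2*S1*C2*S2 + 5*a^2*b^3*S1*C2*S2 + 5/2*a*b^4*S1*C2*S2 + 1/2*b^5*S1*C2*S2 + -1*a^5*C1*S2^2 + -5*a^4*b*C1*S2^2 + -10*a^3*b^2*C1*S2^2 + -10*a^2*b^3*C1*S2^2 + -5*a*b^4*C1*S2^2 + -1*b^5*C1*S2^2 + 1*a^5*S1^2*C3 + 5*a^4*b*S1^2*C3 + 10*a^3*b^2*S1^2*C3 + 10*a^2*b^3*S1^2*C3 + 5*a*b^4*S1^2*C3 + 1*b^5*S1^2*C3 + 1*a^5*C1*C2*C3 + 5*a^4*b*C1*C2*C3 + 10*a^3*b^2*C1*C2*C3 + 10*a^2*b^3*C1*C2*C3 + 5*a*b^4*C1*C2*C3 + 1*b^5*C1*C2*C3 + 1*a^5*S2^2*C3 + 5*a^4*b*S2^2*C3 + 10*a^3*b^2*S2^2*C3 + 10*a^2*b^3*S2^2*C3 + 5*a*b^4*S2^2*C3 + 1*b^5*S2^2*C3 + -1*a^5*C1*S1*S3 + -5*a^4*b*C1*S1*S3 + -10*a^3*b^2*C1*S1*S3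 + -10*a^2*b^3*C1*S1*S3 + -5*a*b^4*C1*S1*S3 + -1*b^5*C1*S1*S3 + 1*a^5*S1*C2*S3 + 5*a^4*b*S1*C2*S3 + 10*a^3*b^2*S1*C2*S3 + 10*a^2*b^3*S1*C2*S3 + 5*a*b^4*S1*C2*S3 + 1*b^5*S1*C2*S3 + -1*a^3*C1*S1*C2*S2 + -1*a^2*b*C1*S1*C2*S2 + 1*a*b^2*C1*S1*C2*S2 + 1*b^3*C1*S1*C2*S2 + -1*a^3*S1^2*S2^2 + -1*a^2*b*S1^2*S2^2 + 1*a*b^2*S1^2*S2^2 + 1*b^3*S1^2*S2^2 + 1*a*S1^3*C2*S2 + 1*b*S1^3*C2*S2 + -1*a*C1*S1^2*S2^2 + -1*b*C1*S1^2*S2^2 + -1*a*S1^2*C2*S2^2 + -1*b*S1^2*C2*S2^2 + 1*a*C1*S1*S2^3 + 1*b*C1*S1*S2^3 + -1*a*C1*S1*C2*S2*C3 + -1*b*C1*S1*C2*S2*C3 + -1*a*S1^2*S2^2*C3 + -1*b*S1^2*S2^2*C3) * hG3 + (-1/2*a^7*S1*S2 + -5/2*a^6*b*S1*S2 + -9/2*a^5*b^2*S1*S2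 + -5/2*a^4*b^3*S1*S2 + 5/2*a^3*b^4*S1*S2 + 9/2*a^2*b^5*S1*S2 + 5/2*a*b^6*S1*S2 + 1/2*b^7*S1*S2 + 1/2*a^7*S1*S3 + 5/2*a^6*b*S1*S3 + 9/2*a^5*b^2*S1*S3 + 5/2*a^4*b^3*S1*S3 + -5/2*a^3*b^4*S1*S3 + -9/2*a^2*b^5*S1*S3 + -5/2*a*b^6*S1*S3 + -1/2*b^7*S1*S3 + 1*a^7*S2*S3 + 5*a^6*b*S2*S3 + 9*a^5*b^2*S2*S3 + 5*a^4*b^3*S2*S3 + -5*a^3*b^4*S2*S3 + -9*a^2*b^5*S2*S3 + -5*a*b^6*S2*S3 + -1*b^7*S2*S3 + -1*a^7*S3^2 + -5*a^6*b*S3^2 + -9*a^5*b^2*S3^2 + -5*a^4*b^3*S3^2 + 5*a^3*b^4*S3^2 + 9*a^2*b^5*S3^2 + 5*a*b^6*S3^2 + 1*b^7*S3^2 + -1/2*a^5*S1*S2*C3 + -5/2*a^4*b*S1*S2*C3 + -5*a^3*b^2*S1*S2*C3 + -5*a^2*b^3*S1*S2*C3 + -5/2*a*b^4*S1*S2*C3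 + -1/2*b^5*S1*S2*C3 + 1*a^5*S2^2*C3 + 5*a^4*b*S2^2*C3 + 10*a^3*b^2*S2^2*C3 + 10*a^2*b^3*S2^2*C3 + 5*a*b^4*S2^2*C3 + 1*b^5*S2^2*C3 + 1/2*a^5*S1*C2*S3 + 5/2*a^4*b*S1*C2*S3 + 5*a^3*b^2*S1*C2*S3 + 5*a^2*b^3*S1*C2*S3 + 5/2*a*b^4*S1*C2*S3 + 1/2*b^5*S1*C2*S3 + -1*a^5*S2*C3*S3 + -5*a^4*b*S2*C3*S3 + -10*a^3*b^2*S2*C3*S3 + -10*a^2*b^3*S2*C3*S3 + -5*a*b^4*S2*C3*S3 + -1*b^5*S2*C3*S3) * hF1 + (1/2*a^7*S1*S2 + 5/2*a^6*b*S1*S2 + 9/2*a^5*b^2*S1*S2 + 5/2*a^4*b^3*S1*S2 + -5/2*a^3*b^4*S1*S2 + -9/2*a^2*b^5*S1*S2 + -5/2*a*b^6*S1*S2 + -1/2*b^7*S1*S2 + -1*a^7*S1*S3 + -5*a^6*b*S1*S3 + -9*a^5*b^2*S1*S3 + -5*a^4*b^3*S1*S3 + 5*a^3*b^4*S1*S3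 + 9*a^2*b^5*S1*S3 + 5*a*b^6*S1*S3 + 1*b^7*S1*S3 + -1/2*a^7*S2*S3 + -5/2*a^6*b*S2*S3 + -9/2*a^5*b^2*S2*S3 + -5/2*a^4*b^3*S2*S3 + 5/2*a^3*b^4*S2*S3 + 9/2*a^2*b^5*S2*S3 + 5/2*a*b^6*S2*S3 + 1/2*b^7*S2*S3 + 1*a^7*S3^2 + 5*a^6*b*S3^2 + 9*a^5*b^2*S3^2 + 5*a^4*b^3*S3^2 + -5*a^3*b^4*S3^2 + -9*a^2*b^5*S3^2 + -5*a*b^6*S3^2 + -1*b^7*S3^2 + -1*a^5*S1^2*C2 + -5*a^4*b*S1^2*C2 + -10*a^3*b^2*S1^2*C2 + -10*a^2*b^3*S1^2*C2 + -5*a*b^4*S1^2*C2 + -1*b^5*S1^2*C2 + 1*a^5*C1*S1*S2 + 5*a^4*b*C1*S1*S2 + 10*a^3*b^2*C1*S1*S2 + 10*a^2*b^3*C1*S1*S2 + 5*a*b^4*C1*S1*S2 + 1*b^5*C1*S1*S2 + -1/2*a^5*S1*S2*C3 + -5/2*a^4*b*S1*S2*C3 + -5*a^3*b^2*S1*S2*C3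 + -5*a^2*b^3*S1*S2*C3 + -5/2*a*b^4*S1*S2*C3 + -1/2*b^5*S1*S2*C3 + -1*a^5*C1*S1*S3 + -5*a^4*b*C1*S1*S3 + -10*a^3*b^2*C1*S1*S3 + -10*a^2*b^3*C1*S1*S3 + -5*a*b^4*C1*S1*S3 + -1*b^5*C1*S1*S3 + 2*a^5*S1*C2*S3 + 10*a^4*b*S1*C2*S3 + 20*a^3*b^2*S1*C2*S3 + 20*a^2*b^3*S1*C2*S3 + 10*a*b^4*S1*C2*S3 + 2*b^5*S1*C2*S3 + -3/2*a^5*C1*S2*S3 + -15/2*a^4*b*C1*S2*S3 + -15*a^3*b^2*C1*S2*S3 + -15*a^2*b^3*C1*S2*S3 + -15/2*a*b^4*C1*S2*S3 + -3/2*b^5*C1*S2*S3 + 1*a^5*S2*C3*S3 + 5*a^4*b*S2*C3*S3 + 10*a^3*b^2*S2*C3*S3 + 10*a^2*b^3*S2*C3*S3 + 5*a*b^4*S2*C3*S3 + 1*b^5*S2*C3*S3 + 1*a^5*C1*S3^2 + 5*a^4*b*C1*S3^2 + 10*a^3*b^2*C1*S3^2 + 10*a^2*b^3*C1*S3^2 +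 5*a*b^4*C1*S3^2 + 1*b^5*C1*S3^2 + -1*a^5*C2*S3^2 + -5*a^4*b*C2*S3^2 + -10*a^3*b^2*C2*S3^2 + -10*a^2*b^3*C2*S3^2 + -5*a*b^4*C2*S3^2 + -1*b^5*C2*S3^2) * hF2 + (1/2*a^7*S1*S3 + 5/2*a^6*b*S1*S3 + 9/2*a^5*b^2*S1*S3 + 5/2*a^4*b^3*S1*S3 + -5/2*a^3*b^4*S1*S3 + -9/2*a^2*b^5*S1*S3 + -5/2*a*b^6*S1*S3 + -1/2*b^7*S1*S3 + -1/2*a^7*S2*S3 + -5/2*a^6*b*S2*S3 + -9/2*a^5*b^2*S2*S3 + -5/2*a^4*b^3*S2*S3 + 5/2*a^3*b^4*S2*S3 + 9/2*a^2*b^5*S2*S3 + 5/2*a*b^6*S2*S3 + 1/2*b^7*S2*S3 + 1*a^5*S1^2*C2 + 5*a^4*b*S1^2*C2 + 10*a^3*b^2*S1^2*C2 + 10*a^2*b^3*S1^2*C2 + 5*a*b^4*S1^2*C2 + 1*b^5*S1^2*C2 + -1*a^5*S1*C2*S2 + -5*a^4*b*S1*C2*S2 + -10*a^3*b^2*S1*C2*S2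 + -10*a^2*b^3*S1*C2*S2 + -5*a*b^4*S1*C2*S2 + -1*b^5*S1*C2*S2 + 1*a^5*S1*S2*C3 + 5*a^4*b*S1*S2*C3 + 10*a^3*b^2*S1*S2*C3 + 10*a^2*b^3*S1*S2*C3 + 5*a*b^4*S1*S2*C3 + 1*b^5*S1*S2*C3 + -1*a^5*S2^2*C3 + -5*a^4*b*S2^2*C3 + -10*a^3*b^2*S2^2*C3 + -10*a^2*b^3*S2^2*C3 + -5*a*b^4*S2^2*C3 + -1*b^5*S2^2*C3 + -1/2*a^5*S1*C2*S3 + -5/2*a^4*b*S1*C2*S3 + -5*a^3*b^2*S1*C2*S3 + -5*a^2*b^3*S1*C2*S3 + -5/2*a*b^4*S1*C2*S3 + -1/2*b^5*S1*C2*S3 + -1/2*a^5*C1*S2*S3 + -5/2*a^4*b*C1*S2*S3 + -5*a^3*b^2*C1*S2*S3 + -5*a^2*b^3*C1*S2*S3 + -5/2*a*b^4*C1*S2*S3 + -1/2*b^5*C1*S2*S3 + 1*a^5*C2*S2*S3 + 5*a^4*b*C2*S2*S3 + 10*a^3*b^2*C2*S2*S3 + 10*a^2*b^3*C2*S2*S3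 + 5*a*b^4*C2*S2*S3 + 1*b^5*C2*S2*S3 + -1*a^5*S1*C3*S3 + -5*a^4*b*S1*C3*S3 + -10*a^3*b^2*S1*C3*S3 + -10*a^2*b^3*S1*C3*S3 + -5*a*b^4*S1*C3*S3 + -1*b^5*S1*C3*S3 + 1*a^5*S2*C3*S3 + 5*a^4*b*S2*C3*S3 + 10*a^3*b^2*S2*C3*S3 + 10*a^2*b^3*S2*C3*S3 + 5*a*b^4*S2*C3*S3 + 1*b^5*S2*C3*S3 + 1*a^5*C1*S3^2 + 5*a^4*b*C1*S3^2 + 10*a^3*b^2*C1*S3^2 + 10*a^2*b^3*C1*S3^2 + 5*a*b^4*C1*S3^2 + 1*b^5*C1*S3^2 + -1*a^5*C2*S3^2 + -5*a^4*b*C2*S3^2 + -10*a^3*b^2*C2*S3^2 + -10*a^2*b^3*C2*S3^2 + -5*a*b^4*C2*S3^2 + -1*b^5*C2*S3^2) * hF3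

private lemma final_poly (a b cA sA cB sB s12 s23 s13 : ℝ)
    (hgA : sA^2 + cA^2 = 1) (hgB : sB^2 + cB^2 = 1)
    (kA : cA^2*(2*(a+b)^2) = (a+b)^2 + s23)
    (kB : cB^2*(2*(a+b)^2) = (a+b)^2 + s13)
    (kC : (-(cA*cB - sA*sB))^2*(2*(a+b)^2) = (a+b)^2 + s12)
    (hssum : s12 + s23 + s13 = -(a^2+4*a*b+b^2)) :
    cA*cB*(-(cA*cB - sA*sB))*(2*(a+b)^2) = a*b := by
  linear_combination (-1*a^2*cB^2 + -2*a*b*cB^2 + -1*b^2*cB^2 + 1*a^2 + 2*a*b + 1*b^2) * hgA + (1*a^2*sA^2 + 2*a*b*sA^2 + 1*b^2*sA^2) * hgB + (-1/2) * kA + (-1/2) * kB + (-1/2) * kC + (-1/2) * hssum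

set_option maxHeartbeats 2000000 in
/-- For `a > b > 0`: any triangle inscribed in the circle of radius `a + b`
centered at the origin whose three side lines are tangent to the concentric
ellipse `x²/a² + y²/b² = 1` has product of interior-angle cosines equal to
`ab/(2(a+b)²)`. -/
theorem circumcircle_family_product_of_cosines (a b : ℝ) (hb : 0 < b) (hab : b < a)
    (P₁ P₂ P₃ : EuclideanSpace ℝ (Fin 2))
    (hind : AffineIndependent ℝ ![P₁, P₂, P₃])
    (hC₁ : dist P₁ 0 = a + b) (hC₂ : dist P₂ 0 = a + b) (hC₃ : dist P₃ 0 = a + b)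
    (ht₁ : SideTangentToEllipse a b P₁ P₂)
    (ht₂ : SideTangentToEllipse a b P₂ P₃)
    (ht₃ : SideTangentToEllipse a b P₃ P₁) :
    Real.cos (∠ P₂ P₁ P₃) * Real.cos (∠ P₁ P₂ P₃) * Real.cos (∠ P₁ P₃ P₂) =
      a * b / (2 * (a + b) ^ 2) := by
  obtain ⟨p₁, q₁, htan₁, hl₁₁, hl₁₂⟩ := ht₁
  obtain ⟨p₂, q₂, htan₂, hl₂₂, hl₂₃⟩ := ht₂
  obtain ⟨p₃, q₃, htan₃, hl₃₃, hl₃₁⟩ := ht₃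
  have hRpos : (0:ℝ) < a + b := by linarith
  have hRne : (a + b : ℝ) ≠ 0 := ne_of_gt hRpos
  -- distinctness of vertices
  have hnePQ : ∀ i j : Fin 3, i ≠ j → ![P₁, P₂, P₃] i ≠ ![P₁, P₂, P₃] j :=
    fun i j hij h => hij (hind.injective h)
  have h12 : P₁ ≠ P₂ := by simpa using hnePQ 0 1 (by decide)
  have h23 : P₂ ≠ P₃ := by simpa using hnePQ 1 2 (by decide)
  have h31 : P₃ ≠ P₁ := by simpa using hnePQ 2 0 (by decide)
  -- norms and inner products in coordinates
  have norm_sq : ∀ v : EuclideanSpace ℝ (Fin 2), ‖v‖^2 = (v 0)^2 + (v 1)^2 := by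
    intro v
    rw [EuclideanSpace.norm_eq, Real.sq_sqrt (by positivity)]
    simp [Fin.sum_univ_two, Real.norm_eq_abs, sq_abs]
  have hip : ∀ U V W : EuclideanSpace ℝ (Fin 2),
      (inner ℝ (U - V) (W - V) : ℝ)
        = (U 0 - V 0) * (W 0 - V 0) + (U 1 - V 1) * (W 1 - V 1) := by
    intro U V W
    simp [PiLp.inner_apply, PiLp.sub_apply, Fin.sum_univ_two, RCLike.inner_apply]
    ring
  have hnsq : ∀ U V : EuclideanSpace ℝ (Fin 2),
      ‖U - V‖^2 = (U 0 - V 0)^2 + (U 1 - V 1)^2 := by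
    intro U V
    rw [norm_sq]
    simp [PiLp.sub_apply]
  have hsqne : ∀ U V : EuclideanSpace ℝ (Fin 2), U ≠ V →
      (U 0 - V 0)^2 + (U 1 - V 1)^2 ≠ 0 := by
    intro U V hUV h
    apply hUV
    have h1 : ‖U - V‖^2 = 0 := by rw [hnsq]; exact h
    have h2 : U - V = 0 := by
      have := pow_eq_zero_iff (n := 2) (by norm_num) |>.mp h1
      exact norm_eq_zero.mp this
    exact sub_eq_zero.mp h2
  have hnpos : ∀ U V : EuclideanSpace ℝ (Fin 2), U ≠ V → 0 < ‖U - V‖ := by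
    intro U V hUV
    rw [norm_pos_iff]
    exact sub_ne_zero_of_ne hUV
  -- circle equations
  have hcircle : ∀ V : EuclideanSpace ℝ (Fin 2), dist V 0 = a + b →
      (V 0)^2 + (V 1)^2 = (a+b)^2 := by
    intro V h
    rw [dist_zero_right] at h
    rw [← norm_sq, h]
  have hc1 : (P₁ 0)^2 + (P₁ 1)^2 = (a+b)^2 := hcircle P₁ hC₁
  have hc2 : (P₂ 0)^2 + (P₂ 1)^2 = (a+b)^2 := hcircle P₂ hC₂
  have hc3 : (P₃ 0)^2 + (P₃ 1)^2 = (a+b)^2 := hcircle P₃ hC₃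
  -- tangency in bilinear form, per side
  have hU12 := side_poly a b p₁ q₁ (P₁ 0) (P₁ 1) (P₂ 0) (P₂ 1) hc1 hc2
    (hsqne P₁ P₂ h12) htan₁ hl₁₁ hl₁₂
  have hU23 := side_poly a b p₂ q₂ (P₂ 0) (P₂ 1) (P₃ 0) (P₃ 1) hc2 hc3
    (hsqne P₂ P₃ h23) htan₂ hl₂₂ hl₂₃
  have hU31 := side_poly a b p₃ q₃ (P₃ 0) (P₃ 1) (P₁ 0) (P₁ 1) hc3 hc1
    (hsqne P₃ P₁ h31) htan₃ hl₃₃ hl₃₁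
  -- inputs to the core Poncelet identity
  have hG1 : (P₂ 0 * P₃ 0 - P₂ 1 * P₃ 1)^2 + (P₂ 0 * P₃ 1 + P₃ 0 * P₂ 1)^2 = (a+b)^4 := by
    linear_combination (P₃ 0^2 + P₃ 1^2)*hc2 + (a+b)^2*hc3
  have hG2 : (P₃ 0 * P₁ 0 - P₃ 1 * P₁ 1)^2 + (P₃ 0 * P₁ 1 + P₁ 0 * P₃ 1)^2 = (a+b)^4 := by
    linear_combination (P₁ 0^2 + P₁ 1^2)*hc3 + (a+b)^2*hc1
  have hG3 : (P₁ 0 * P₂ 0 - P₁ 1 * P₂ 1)^2 + (P₁ 0 * P₂ 1 + P₂ 0 * P₁ 1)^2 = (a+b)^4 := by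
    linear_combination (P₂ 0^2 + P₂ 1^2)*hc1 + (a+b)^2*hc2
  have hF1 : (P₃ 0 * P₁ 0 - P₃ 1 * P₁ 1) * (P₁ 0 * P₂ 0 - P₁ 1 * P₂ 1)
      + (P₃ 0 * P₁ 1 + P₁ 0 * P₃ 1) * (P₁ 0 * P₂ 1 + P₂ 0 * P₁ 1)
      = (a-b)*(a+b)*(P₂ 0 * P₃ 0 - P₂ 1 * P₃ 1) - 2*a*b*(a+b)^2 := by
    linear_combination (P₂ 0 * P₃ 0 + P₂ 1 * P₃ 1)*hc1 - hU23
  have hF2 : (P₂ 0 * P₃ 0 - P₂ 1 * P₃ 1) * (P₁ 0 * P₂ 0 - P₁ 1 * P₂ 1)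
      + (P₂ 0 * P₃ 1 + P₃ 0 * P₂ 1) * (P₁ 0 * P₂ 1 + P₂ 0 * P₁ 1)
      = (a-b)*(a+b)*(P₃ 0 * P₁ 0 - P₃ 1 * P₁ 1) - 2*a*b*(a+b)^2 := by
    linear_combination (P₃ 0 * P₁ 0 + P₃ 1 * P₁ 1)*hc2 - hU31
  have hF3 : (P₂ 0 * P₃ 0 - P₂ 1 * P₃ 1) * (P₃ 0 * P₁ 0 - P₃ 1 * P₁ 1)
      + (P₂ 0 * P₃ 1 + P₃ 0 * P₂ 1) * (P₃ 0 * P₁ 1 + P₁ 0 * P₃ 1)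
      = (a-b)*(a+b)*(P₁ 0 * P₂ 0 - P₁ 1 * P₂ 1) - 2*a*b*(a+b)^2 := by
    linear_combination (P₁ 0 * P₂ 0 + P₁ 1 * P₂ 1)*hc3 - hU12
  have hcore := core_poly a b
    (P₂ 0 * P₃ 0 - P₂ 1 * P₃ 1) (P₂ 0 * P₃ 1 + P₃ 0 * P₂ 1)
    (P₃ 0 * P₁ 0 - P₃ 1 * P₁ 1) (P₃ 0 * P₁ 1 + P₁ 0 * P₃ 1)
    (P₁ 0 * P₂ 0 - P₁ 1 * P₂ 1) (P₁ 0 * P₂ 1 + P₂ 0 * P₁ 1)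
    hG1 hG2 hG3 hF1 hF2 hF3
  -- positivity of the saturation factors
  have hp1 : (0:ℝ) < (a+b)^4 - ((P₃ 0 * P₁ 0 - P₃ 1 * P₁ 1) * (P₁ 0 * P₂ 0 - P₁ 1 * P₂ 1)
      + (P₃ 0 * P₁ 1 + P₁ 0 * P₃ 1) * (P₁ 0 * P₂ 1 + P₂ 0 * P₁ 1)) := by
    have heq : (a+b)^4 - ((P₃ 0 * P₁ 0 - P₃ 1 * P₁ 1) * (P₁ 0 * P₂ 0 - P₁ 1 * P₂ 1)
        + (P₃ 0 * P₁ 1 + P₁ 0 * P₃ 1) * (P₁ 0 * P₂ 1 + P₂ 0 * P₁ 1))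
        = (a+b)^2 * (((P₂ 0 - P₃ 0)^2 + (P₂ 1 - P₃ 1)^2)/2) := by
      linear_combination -(P₂ 0 * P₃ 0 + P₂ 1 * P₃ 1)*hc1 - ((a+b)^2/2)*hc2 - ((a+b)^2/2)*hc3
    rw [heq]
    have hpos23 : 0 < (P₂ 0 - P₃ 0)^2 + (P₂ 1 - P₃ 1)^2 :=
      lt_of_le_of_ne (by positivity) (Ne.symm (hsqne P₂ P₃ h23))
    exact mul_pos (pow_pos hRpos 2) (by linarith)
  have hp2 : (0:ℝ) < (a+b)^4 - ((P₂ 0 * P₃ 0 - P₂ 1 * P₃ 1) * (P₁ 0 * P₂ 0 - P₁ 1 * P₂ 1)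
      + (P₂ 0 * P₃ 1 + P₃ 0 * P₂ 1) * (P₁ 0 * P₂ 1 + P₂ 0 * P₁ 1)) := by
    have heq : (a+b)^4 - ((P₂ 0 * P₃ 0 - P₂ 1 * P₃ 1) * (P₁ 0 * P₂ 0 - P₁ 1 * P₂ 1)
        + (P₂ 0 * P₃ 1 + P₃ 0 * P₂ 1) * (P₁ 0 * P₂ 1 + P₂ 0 * P₁ 1))
        = (a+b)^2 * (((P₃ 0 - P₁ 0)^2 + (P₃ 1 - P₁ 1)^2)/2) := by
      linear_combination -(P₃ 0 * P₁ 0 + P₃ 1 * P₁ 1)*hc2 - ((a+b)^2/2)*hc3 - ((a+b)^2/2)*hc1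
    rw [heq]
    have hpos31 : 0 < (P₃ 0 - P₁ 0)^2 + (P₃ 1 - P₁ 1)^2 :=
      lt_of_le_of_ne (by positivity) (Ne.symm (hsqne P₃ P₁ h31))
    exact mul_pos (pow_pos hRpos 2) (by linarith)
  have hp3 : (0:ℝ) < (a+b)^4 - ((P₂ 0 * P₃ 0 - P₂ 1 * P₃ 1) * (P₃ 0 * P₁ 0 - P₃ 1 * P₁ 1)
      + (P₂ 0 * P₃ 1 + P₃ 0 * P₂ 1) * (P₃ 0 * P₁ 1 + P₁ 0 * P₃ 1)) := by
    have heq : (a+b)^4 - ((P₂ 0 * P₃ 0 - P₂ 1 * P₃ 1) * (P₃ 0 * P₁ 0 - P₃ 1 * P₁ 1)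
        + (P₂ 0 * P₃ 1 + P₃ 0 * P₂ 1) * (P₃ 0 * P₁ 1 + P₁ 0 * P₃ 1))
        = (a+b)^2 * (((P₁ 0 - P₂ 0)^2 + (P₁ 1 - P₂ 1)^2)/2) := by
      linear_combination -(P₁ 0 * P₂ 0 + P₁ 1 * P₂ 1)*hc3 - ((a+b)^2/2)*hc1 - ((a+b)^2/2)*hc2
    rw [heq]
    have hpos12 : 0 < (P₁ 0 - P₂ 0)^2 + (P₁ 1 - P₂ 1)^2 :=
      lt_of_le_of_ne (by positivity) (Ne.symm (hsqne P₁ P₂ h12))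
    exact mul_pos (pow_pos hRpos 2) (by linarith)
  have hfac : (a+b)*((P₂ 0 * P₃ 0 - P₂ 1 * P₃ 1) + (P₃ 0 * P₁ 0 - P₃ 1 * P₁ 1)
      + (P₁ 0 * P₂ 0 - P₁ 1 * P₂ 1)) + (a-b)*(a+b)^2 = 0 := by
    by_contra hA
    exact (mul_ne_zero hA (ne_of_gt (mul_pos hp1 (mul_pos hp2 hp3)))) hcore
  have hCsum : (P₂ 0 * P₃ 0 - P₂ 1 * P₃ 1) + (P₃ 0 * P₁ 0 - P₃ 1 * P₁ 1)
      + (P₁ 0 * P₂ 0 - P₁ 1 * P₂ 1) = -((a-b)*(a+b)) := by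
    apply mul_left_cancel₀ hRne
    linear_combination hfac
  have hssum : (P₁ 0 * P₂ 0 + P₁ 1 * P₂ 1) + (P₂ 0 * P₃ 0 + P₂ 1 * P₃ 1)
      + (P₃ 0 * P₁ 0 + P₃ 1 * P₁ 1) = -(a^2+4*a*b+b^2) := by
    apply mul_left_cancel₀ (pow_ne_zero 2 hRne)
    linear_combination -hU12 - hU23 - hU31 + (a^2-b^2)*hCsum
  -- cosine formulas
  have hcosA : Real.cos (∠ P₂ P₁ P₃)
      = ((P₂ 0 - P₁ 0)*(P₃ 0 - P₁ 0) + (P₂ 1 - P₁ 1)*(P₃ 1 - P₁ 1))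
        / (‖P₂ - P₁‖ * ‖P₃ - P₁‖) := by
    have h : ∠ P₂ P₁ P₃ = InnerProductGeometry.angle (P₂ - P₁) (P₃ - P₁) := rfl
    rw [h, InnerProductGeometry.cos_angle, hip P₂ P₁ P₃]
  have hcosB : Real.cos (∠ P₁ P₂ P₃)
      = ((P₁ 0 - P₂ 0)*(P₃ 0 - P₂ 0) + (P₁ 1 - P₂ 1)*(P₃ 1 - P₂ 1))
        / (‖P₁ - P₂‖ * ‖P₃ - P₂‖) := by
    have h : ∠ P₁ P₂ P₃ = InnerProductGeometry.angle (P₁ - P₂) (P₃ - P₂) := rfl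
    rw [h, InnerProductGeometry.cos_angle, hip P₁ P₂ P₃]
  have hcosC : Real.cos (∠ P₁ P₃ P₂)
      = ((P₁ 0 - P₃ 0)*(P₂ 0 - P₃ 0) + (P₁ 1 - P₃ 1)*(P₂ 1 - P₃ 1))
        / (‖P₁ - P₃‖ * ‖P₂ - P₃‖) := by
    have h : ∠ P₁ P₃ P₂ = InnerProductGeometry.angle (P₁ - P₃) (P₂ - P₃) := rfl
    rw [h, InnerProductGeometry.cos_angle, hip P₁ P₃ P₂]
  -- squared cosine identities
  have kA : Real.cos (∠ P₂ P₁ P₃)^2 * (2*(a+b)^2)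
      = (a+b)^2 + (P₂ 0 * P₃ 0 + P₂ 1 * P₃ 1) := by
    have hz2 : ‖P₂ - P₁‖ ≠ 0 := ne_of_gt (hnpos P₂ P₁ h12.symm)
    have hz3 : ‖P₃ - P₁‖ ≠ 0 := ne_of_gt (hnpos P₃ P₁ h31)
    have e : Real.cos (∠ P₂ P₁ P₃)^2 * (‖P₂ - P₁‖^2 * ‖P₃ - P₁‖^2)
        = ((P₂ 0 - P₁ 0)*(P₃ 0 - P₁ 0) + (P₂ 1 - P₁ 1)*(P₃ 1 - P₁ 1))^2 := by
      rw [hcosA, div_pow, mul_pow]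
      exact div_mul_cancel₀ _ (mul_ne_zero (pow_ne_zero 2 hz2) (pow_ne_zero 2 hz3))
    apply mul_right_cancel₀
      (mul_ne_zero (pow_ne_zero 2 hz2) (pow_ne_zero 2 hz3) :
        ‖P₂ - P₁‖^2 * ‖P₃ - P₁‖^2 ≠ 0)
    calc Real.cos (∠ P₂ P₁ P₃)^2 * (2*(a+b)^2) * (‖P₂ - P₁‖^2 * ‖P₃ - P₁‖^2)
        = Real.cos (∠ P₂ P₁ P₃)^2 * (‖P₂ - P₁‖^2 * ‖P₃ - P₁‖^2) * (2*(a+b)^2) := by ring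
      _ = ((P₂ 0 - P₁ 0)*(P₃ 0 - P₁ 0) + (P₂ 1 - P₁ 1)*(P₃ 1 - P₁ 1))^2 * (2*(a+b)^2) := by
          rw [e]
      _ = ((a+b)^2 + (P₂ 0 * P₃ 0 + P₂ 1 * P₃ 1)) * (‖P₂ - P₁‖^2 * ‖P₃ - P₁‖^2) := by
          rw [hnsq P₂ P₁, hnsq P₃ P₁]
          linear_combination cossq_poly (a+b) (P₁ 0) (P₁ 1) (P₂ 0) (P₂ 1) (P₃ 0) (P₃ 1) hc1 hc2 hc3
  have kB : Real.cos (∠ P₁ P₂ P₃)^2 * (2*(a+b)^2)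
      = (a+b)^2 + (P₃ 0 * P₁ 0 + P₃ 1 * P₁ 1) := by
    have hz2 : ‖P₁ - P₂‖ ≠ 0 := ne_of_gt (hnpos P₁ P₂ h12)
    have hz3 : ‖P₃ - P₂‖ ≠ 0 := ne_of_gt (hnpos P₃ P₂ h23.symm)
    have e : Real.cos (∠ P₁ P₂ P₃)^2 * (‖P₁ - P₂‖^2 * ‖P₃ - P₂‖^2)
        = ((P₁ 0 - P₂ 0)*(P₃ 0 - P₂ 0) + (P₁ 1 - P₂ 1)*(P₃ 1 - P₂ 1))^2 := by
      rw [hcosB, div_pow, mul_pow]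
      exact div_mul_cancel₀ _ (mul_ne_zero (pow_ne_zero 2 hz2) (pow_ne_zero 2 hz3))
    apply mul_right_cancel₀
      (mul_ne_zero (pow_ne_zero 2 hz2) (pow_ne_zero 2 hz3) :
        ‖P₁ - P₂‖^2 * ‖P₃ - P₂‖^2 ≠ 0)
    calc Real.cos (∠ P₁ P₂ P₃)^2 * (2*(a+b)^2) * (‖P₁ - P₂‖^2 * ‖P₃ - P₂‖^2)
        = Real.cos (∠ P₁ P₂ P₃)^2 * (‖P₁ - P₂‖^2 * ‖P₃ - P₂‖^2) * (2*(a+b)^2) := by ring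
      _ = ((P₁ 0 - P₂ 0)*(P₃ 0 - P₂ 0) + (P₁ 1 - P₂ 1)*(P₃ 1 - P₂ 1))^2 * (2*(a+b)^2) := by
          rw [e]
      _ = ((a+b)^2 + (P₃ 0 * P₁ 0 + P₃ 1 * P₁ 1)) * (‖P₁ - P₂‖^2 * ‖P₃ - P₂‖^2) := by
          rw [hnsq P₁ P₂, hnsq P₃ P₂]
          linear_combination cossq_poly (a+b) (P₂ 0) (P₂ 1) (P₁ 0) (P₁ 1) (P₃ 0) (P₃ 1) hc2 hc1 hc3
  have kC : Real.cos (∠ P₁ P₃ P₂)^2 * (2*(a+b)^2)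
      = (a+b)^2 + (P₁ 0 * P₂ 0 + P₁ 1 * P₂ 1) := by
    have hz2 : ‖P₁ - P₃‖ ≠ 0 := ne_of_gt (hnpos P₁ P₃ h31.symm)
    have hz3 : ‖P₂ - P₃‖ ≠ 0 := ne_of_gt (hnpos P₂ P₃ h23)
    have e : Real.cos (∠ P₁ P₃ P₂)^2 * (‖P₁ - P₃‖^2 * ‖P₂ - P₃‖^2)
        = ((P₁ 0 - P₃ 0)*(P₂ 0 - P₃ 0) + (P₁ 1 - P₃ 1)*(P₂ 1 - P₃ 1))^2 := by
      rw [hcosC, div_pow, mul_pow]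
      exact div_mul_cancel₀ _ (mul_ne_zero (pow_ne_zero 2 hz2) (pow_ne_zero 2 hz3))
    apply mul_right_cancel₀
      (mul_ne_zero (pow_ne_zero 2 hz2) (pow_ne_zero 2 hz3) :
        ‖P₁ - P₃‖^2 * ‖P₂ - P₃‖^2 ≠ 0)
    calc Real.cos (∠ P₁ P₃ P₂)^2 * (2*(a+b)^2) * (‖P₁ - P₃‖^2 * ‖P₂ - P₃‖^2)
        = Real.cos (∠ P₁ P₃ P₂)^2 * (‖P₁ - P₃‖^2 * ‖P₂ - P₃‖^2) * (2*(a+b)^2) := by ring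
      _ = ((P₁ 0 - P₃ 0)*(P₂ 0 - P₃ 0) + (P₁ 1 - P₃ 1)*(P₂ 1 - P₃ 1))^2 * (2*(a+b)^2) := by
          rw [e]
      _ = ((a+b)^2 + (P₁ 0 * P₂ 0 + P₁ 1 * P₂ 1)) * (‖P₁ - P₃‖^2 * ‖P₂ - P₃‖^2) := by
          rw [hnsq P₁ P₃, hnsq P₂ P₃]
          linear_combination cossq_poly (a+b) (P₃ 0) (P₃ 1) (P₁ 0) (P₁ 1) (P₂ 0) (P₂ 1) hc3 hc1 hc2
  -- angle sum and conclusion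
  have hsum : ∠ P₂ P₁ P₃ + ∠ P₁ P₂ P₃ + ∠ P₁ P₃ P₂ = Real.pi := by
    have h := EuclideanGeometry.angle_add_angle_add_angle_eq_pi
      (p₁ := P₂) (p₂ := P₁) (p₃ := P₃) h12
    rw [EuclideanGeometry.angle_comm P₃ P₂ P₁] at h
    linarith
  have hCeq : ∠ P₁ P₃ P₂ = Real.pi - (∠ P₂ P₁ P₃ + ∠ P₁ P₂ P₃) := by linarith
  have hcosC2 : Real.cos (∠ P₁ P₃ P₂)
      = -(Real.cos (∠ P₂ P₁ P₃) * Real.cos (∠ P₁ P₂ P₃)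
          - Real.sin (∠ P₂ P₁ P₃) * Real.sin (∠ P₁ P₂ P₃)) := by
    rw [hCeq, Real.cos_pi_sub, Real.cos_add]
  rw [hcosC2] at kC
  have hfin := final_poly a b (Real.cos (∠ P₂ P₁ P₃)) (Real.sin (∠ P₂ P₁ P₃))
    (Real.cos (∠ P₁ P₂ P₃)) (Real.sin (∠ P₁ P₂ P₃))
    (P₁ 0 * P₂ 0 + P₁ 1 * P₂ 1) (P₂ 0 * P₃ 0 + P₂ 1 * P₃ 1) (P₃ 0 * P₁ 0 + P₃ 1 * P₁ 1)
    (Real.sin_sq_add_cos_sq _) (Real.sin_sq_add_cos_sq _) kA kB kC hssum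
  rw [eq_div_iff (ne_of_gt (mul_pos two_pos (pow_pos hRpos 2)))]
  rw [hcosC2]
  linear_combination hfin
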